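/- Let Ω ⊆ ℝ² be an open bounded set and f : Ω → ℝ measurable. Suppose there exist constants C > 0 and an integer m ≥ 0 such that for all λ ≥ 2, |∫_Ω e^{iλ f(x)} dx| ≤ C λ^{-1} (log λ)^m. Then there is a constant C' > 0 such that for all sufficiently small ε ∈ (0,1), the Lebesgue measure of {x ∈ Ω : |f(x)| ≤ ε} is at most C' ε |log ε|^{m+1}. -/

import Mathlib

open MeasureTheory Real Set

private lemma kerL1 (T t : ℝ) (hT : 0 < T) (ht : t ≠ 0) :
    ∫ l in (0:ℝ)..T, (1 - l/T) * Real.cos (l*t) = (1 - Real.cos (T*t))/(T*t^2) := by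
  have key : ∀ l ∈ Set.uIcc (0:ℝ) T, HasDerivAt
      (fun l => Real.sin (l*t)/t - l*Real.sin (l*t)/(T*t) - Real.cos (l*t)/(T*t^2))
      ((1 - l/T) * Real.cos (l*t)) l := by
    intro l _
    have hs : HasDerivAt (fun l : ℝ => Real.sin (l*t)) (Real.cos (l*t) * (1*t)) l :=
      ((hasDerivAt_id l).mul_const t).sin
    have hc : HasDerivAt (fun l : ℝ => Real.cos (l*t)) (-Real.sin (l*t) * (1*t)) l :=
      ((hasDerivAt_id l).mul_const t).cos
    have h1 := hs.div_const t
    have h2 := ((hasDerivAt_id l).mul hs).div_const (T*t)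
    have h3 := hc.div_const (T*t^2)
    refine ((h1.sub h2).sub h3).congr_deriv ?_
    simp only [id_eq]
    field_simp
    ring
  rw [intervalIntegral.integral_eq_sub_of_hasDerivAt key]
  · simp [Real.sin_zero, Real.cos_zero]
    field_simp
    ring
  · apply Continuous.intervalIntegrable
    continuity

private lemma kerL2 (T : ℝ) (hT : 0 < T) :
    ∫ l in (0:ℝ)..T, (1 - l/T) = T/2 := by
  have key : ∀ l ∈ Set.uIcc (0:ℝ) T, HasDerivAt (fun l : ℝ => l - l^2/(2*T)) (1 - l/T) l := by
    intro l _
    have h1 := (hasDerivAt_id l)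
    have h2 := ((hasDerivAt_pow 2 l)).div_const (2*T)
    refine (h1.sub h2).congr_deriv ?_
    field_simp
    ring
  rw [intervalIntegral.integral_eq_sub_of_hasDerivAt key]
  · field_simp; ring
  · apply Continuous.intervalIntegrable; continuity

private lemma kerL3 (T : ℝ) (m : ℕ) (hT : 2 ≤ T) :
    ∫ l in (2:ℝ)..T, (Real.log l)^m / l
      = ((Real.log T)^(m+1) - (Real.log 2)^(m+1))/(m+1) := by
  have key : ∀ l ∈ Set.uIcc (2:ℝ) T, HasDerivAt
      (fun l : ℝ => (Real.log l)^(m+1)/(m+1)) ((Real.log l)^m / l) l := by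
    intro l hl
    rw [Set.uIcc_of_le hT] at hl
    have hl0 : l ≠ 0 := by nlinarith [hl.1]
    have hlog := Real.hasDerivAt_log hl0
    have := (hlog.pow (m+1)).div_const (m+1)
    refine this.congr_deriv ?_
    have : (m:ℝ) + 1 ≠ 0 := by positivity
    simp only [Nat.add_sub_cancel, Nat.cast_add, Nat.cast_one]
    field_simp
  rw [intervalIntegral.integral_eq_sub_of_hasDerivAt key]
  · ring
  · apply ContinuousOn.intervalIntegrable
    rw [Set.uIcc_of_le hT]
    apply ContinuousOn.div
    · exact (Real.continuousOn_log.mono (by intro x hx; simp; nlinarith [hx.1])).pow m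
    · exact continuousOn_id
    · intro x hx; nlinarith [hx.1]

private lemma kerNonneg (T t : ℝ) (hT : 0 < T) :
    0 ≤ ∫ l in Set.Ioc (0:ℝ) T, (1 - l/T) * Real.cos (l*t) := by
  rw [← intervalIntegral.integral_of_le hT.le]
  rcases eq_or_ne t 0 with rfl | ht
  · rw [intervalIntegral.integral_of_le hT.le]
    apply setIntegral_nonneg measurableSet_Ioc
    intro l hl
    simp only [mul_zero, Real.cos_zero, mul_one]
    have : l/T ≤ 1 := (div_le_one hT).2 hl.2
    linarith
  · rw [kerL1 T t hT ht]
    have h1 : Real.cos (T*t) ≤ 1 := Real.cos_le_one _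
    apply div_nonneg (by linarith) (by positivity)

private lemma kerLower (T t : ℝ) (hT : 0 < T) (ht : |t| ≤ 1/T) :
    Real.cos 1 * (T/2) ≤ ∫ l in Set.Ioc (0:ℝ) T, (1 - l/T) * Real.cos (l*t) := by
  rw [← intervalIntegral.integral_of_le hT.le]
  have hmono : ∫ l in (0:ℝ)..T, (1 - l/T) * Real.cos 1 ≤
      ∫ l in (0:ℝ)..T, (1 - l/T) * Real.cos (l*t) := by
    apply intervalIntegral.integral_mono_on hT.le
    · exact (Continuous.intervalIntegrable (by continuity) _ _)
    · exact (Continuous.intervalIntegrable (by continuity) _ _)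
    · intro l hl
      have hw : 0 ≤ 1 - l/T := by
        have : l/T ≤ 1 := (div_le_one hT).2 hl.2
        linarith
      apply mul_le_mul_of_nonneg_left _ hw
      have habs : |l*t| ≤ 1 := by
        rw [abs_mul]
        calc |l| * |t| ≤ T * (1/T) := by
              apply mul_le_mul _ ht (abs_nonneg _) hT.le
              rw [abs_of_nonneg hl.1]; exact hl.2
          _ = 1 := by field_simp
      calc Real.cos 1 ≤ Real.cos |l*t| := by
            apply Real.cos_le_cos_of_nonneg_of_le_pi (abs_nonneg _) _ habs
            linarith [Real.pi_gt_three]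
        _ = Real.cos (l*t) := Real.cos_abs _
  calc Real.cos 1 * (T/2) = ∫ l in (0:ℝ)..T, (1 - l/T) * Real.cos 1 := by
        rw [intervalIntegral.integral_mul_const, kerL2 T hT]; ring
    _ ≤ _ := hmono

theorem stmt_2 (Ω : Set (ℝ × ℝ)) (hΩo : IsOpen Ω) (hΩb : Bornology.IsBounded Ω)
    (f : ℝ × ℝ → ℝ) (hf : Measurable f)
    (C : ℝ) (m : ℕ) (hC : 0 < C)
    (hosc : ∀ L : ℝ, 2 ≤ L →
      ‖∫ x in Ω, Complex.exp (Complex.I * L * f x)‖ ≤ C * L⁻¹ * (Real.log L) ^ m) :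
    ∃ C' > 0, ∃ ε₀ ∈ Ioo (0:ℝ) 1, ∀ ε ∈ Ioo (0:ℝ) ε₀,
      (volume {x ∈ Ω | |f x| ≤ ε}).toReal ≤ C' * ε * |Real.log ε| ^ (m + 1) := by
  have hΩm : MeasurableSet Ω := hΩo.measurableSet
  have hVfin : volume Ω < ⊤ := hΩb.measure_lt_top
  set V : ℝ := (volume Ω).toReal with hV
  have hVnn : 0 ≤ V := ENNReal.toReal_nonneg
  have hcos1 : 0 < Real.cos 1 := Real.cos_pos_of_mem_Ioo
    ⟨by linarith [Real.pi_gt_three], by linarith [Real.pi_gt_three]⟩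
  have hlog2 : 0 < Real.log 2 := Real.log_pos (by norm_num)
  have hC'pos : 0 < 2/Real.cos 1 * (2*V/(Real.log 2)^(m+1) + C) := by
    apply mul_pos (div_pos two_pos hcos1)
    have : 0 ≤ 2*V/(Real.log 2)^(m+1) := by positivity
    linarith
  refine ⟨2/Real.cos 1 * (2*V/(Real.log 2)^(m+1) + C), hC'pos, 1/2, ⟨by norm_num, by norm_num⟩, ?_⟩
  rintro ε ⟨hε0, hε2⟩
  haveI : IsFiniteMeasure (volume.restrict Ω) :=
    ⟨by rwa [Measure.restrict_apply_univ]⟩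
  set T : ℝ := ε⁻¹ with hTdef
  have hT0 : 0 < T := by positivity
  have hT2 : 2 < T := by
    rw [hTdef, show (2:ℝ) = (1/2:ℝ)⁻¹ by norm_num]
    exact inv_strictAnti₀ hε0 hε2
  set E := {x ∈ Ω | |f x| ≤ ε} with hEdef
  have hEeq : E = Ω ∩ (fun x => |f x|) ⁻¹' Set.Iic ε := by
    ext x; simp [hEdef, Set.mem_sep_iff]
  have hEm : MeasurableSet E := by
    rw [hEeq]; exact hΩm.inter (hf.abs measurableSet_Iic)
  have hEsub : E ⊆ Ω := fun x hx => hx.1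
  have hEfin : volume E < ⊤ := lt_of_le_of_lt (measure_mono hEsub) hVfin
  haveI : IsFiniteMeasure (volume.restrict (Set.Ioc (0:ℝ) T)) :=
    ⟨by rw [Measure.restrict_apply_univ]; exact measure_Ioc_lt_top⟩
  -- product integrability
  have hPmeas : Measurable (fun p : ℝ × (ℝ×ℝ) => (1 - p.1/T) * Real.cos (p.1 * f p.2)) := by
    apply Measurable.mul
    · exact measurable_const.sub (measurable_fst.div_const T)
    · exact Real.continuous_cos.measurable.comp (measurable_fst.mul (hf.comp measurable_snd))
  have hPint : Integrable (fun p : ℝ × (ℝ×ℝ) => (1 - p.1/T) * Real.cos (p.1 * f p.2))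
      ((volume.restrict (Set.Ioc (0:ℝ) T)).prod (volume.restrict Ω)) := by
    apply Integrable.mono' (integrable_const 1) hPmeas.aestronglyMeasurable
    rw [Measure.prod_restrict]
    filter_upwards [ae_restrict_mem (measurableSet_Ioc.prod hΩm)] with p hp
    have h1 : 0 < p.1 := hp.1.1
    have h2 : p.1 ≤ T := hp.1.2
    have hw0 : 0 ≤ 1 - p.1/T := by
      have : p.1/T ≤ 1 := (div_le_one hT0).2 h2
      linarith
    have hw1 : 1 - p.1/T ≤ 1 := by
      have : 0 ≤ p.1/T := div_nonneg h1.le hT0.le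
      linarith
    rw [Real.norm_eq_abs, abs_mul]
    calc |1 - p.1/T| * |Real.cos (p.1 * f p.2)| ≤ 1 * 1 := by
          apply mul_le_mul _ (Real.abs_cos_le_one _) (abs_nonneg _) zero_le_one
          rw [abs_of_nonneg hw0]; exact hw1
      _ = 1 := by norm_num
  have hx_int : IntegrableOn
      (fun x => ∫ l in Set.Ioc (0:ℝ) T, (1 - l/T) * Real.cos (l * f x)) Ω volume := by
    have := hPint.integral_prod_right
    simpa [IntegrableOn] using this
  have hl_int : IntegrableOn
      (fun l => ∫ x in Ω, (1 - l/T) * Real.cos (l * f x)) (Set.Ioc (0:ℝ) T) volume := by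
    have := hPint.integral_prod_left
    simpa [IntegrableOn] using this
  have hl_abs : IntegrableOn
      (fun l => |∫ x in Ω, (1 - l/T) * Real.cos (l * f x)|) (Set.Ioc (0:ℝ) T) volume :=
    hl_int.abs
  have hswap : ∫ l in Set.Ioc (0:ℝ) T, ∫ x in Ω, (1 - l/T) * Real.cos (l * f x)
      = ∫ x in Ω, ∫ l in Set.Ioc (0:ℝ) T, (1 - l/T) * Real.cos (l * f x) :=
    integral_integral_swap hPint
  -- Step A: lower bound over E
  have stepA : Real.cos 1 * (T/2) * (volume E).toReal ≤
      ∫ x in E, ∫ l in Set.Ioc (0:ℝ) T, (1 - l/T) * Real.cos (l * f x) := by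
    have hle : ∀ x ∈ E, Real.cos 1 * (T/2) ≤
        ∫ l in Set.Ioc (0:ℝ) T, (1 - l/T) * Real.cos (l * f x) := by
      intro x hx
      apply kerLower T (f x) hT0
      rw [hTdef, one_div, inv_inv]
      exact hx.2
    calc Real.cos 1 * (T/2) * (volume E).toReal
        = ∫ _x in E, Real.cos 1 * (T/2) := by
          rw [setIntegral_const, smul_eq_mul, measureReal_def]; ring
      _ ≤ _ := by
          apply setIntegral_mono_on (integrableOn_const hEfin.ne)
            (hx_int.mono_set hEsub) hEm hle
  -- Step B: extend to Ω
  have stepB : (∫ x in E, ∫ l in Set.Ioc (0:ℝ) T, (1 - l/T) * Real.cos (l * f x)) ≤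
      ∫ x in Ω, ∫ l in Set.Ioc (0:ℝ) T, (1 - l/T) * Real.cos (l * f x) := by
    apply setIntegral_mono_set hx_int
    · exact Filter.Eventually.of_forall (fun x => kerNonneg T (f x) hT0)
    · exact Filter.Eventually.of_forall hEsub
  -- bound |h l| by V
  have hhV : ∀ l : ℝ, |∫ x in Ω, Real.cos (l * f x)| ≤ V := by
    intro l
    have := norm_integral_le_of_norm_le_const (μ := volume.restrict Ω)
      (f := fun x => Real.cos (l * f x)) (C := 1)
      (Filter.Eventually.of_forall (fun x => by
        rw [Real.norm_eq_abs]; exact Real.abs_cos_le_one _))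
    rw [Real.norm_eq_abs] at this
    simpa [Measure.restrict_apply_univ, measureReal_def, hV] using this
  -- rewrite inner integral
  have hwh_eq : ∀ l : ℝ, (∫ x in Ω, (1 - l/T) * Real.cos (l * f x))
      = (1 - l/T) * ∫ x in Ω, Real.cos (l * f x) := fun l => integral_const_mul _ _
  -- Step D: upper bound of λ-integral
  have habs_le : (∫ l in Set.Ioc (0:ℝ) T, ∫ x in Ω, (1 - l/T) * Real.cos (l * f x))
      ≤ ∫ l in Set.Ioc (0:ℝ) T, |∫ x in Ω, (1 - l/T) * Real.cos (l * f x)| :=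
    integral_mono hl_int hl_int.abs (fun l => le_abs_self _)
  have hsplit : (∫ l in Set.Ioc (0:ℝ) T, |∫ x in Ω, (1 - l/T) * Real.cos (l * f x)|)
      = (∫ l in Set.Ioc (0:ℝ) 2, |∫ x in Ω, (1 - l/T) * Real.cos (l * f x)|)
      + ∫ l in Set.Ioc (2:ℝ) T, |∫ x in Ω, (1 - l/T) * Real.cos (l * f x)| := by
    rw [← setIntegral_union (Set.Ioc_disjoint_Ioc_of_le le_rfl) measurableSet_Ioc
      (hl_abs.mono_set (Set.Ioc_subset_Ioc_right hT2.le))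
      (hl_abs.mono_set (Set.Ioc_subset_Ioc_left (by norm_num))),
      Set.Ioc_union_Ioc_eq_Ioc (by norm_num) hT2.le]
  have piece1 : (∫ l in Set.Ioc (0:ℝ) 2, |∫ x in Ω, (1 - l/T) * Real.cos (l * f x)|)
      ≤ 2 * V := by
    have hmono : (∫ l in Set.Ioc (0:ℝ) 2, |∫ x in Ω, (1 - l/T) * Real.cos (l * f x)|)
        ≤ ∫ _l in Set.Ioc (0:ℝ) 2, V := by
      apply setIntegral_mono_on
        (hl_abs.mono_set (Set.Ioc_subset_Ioc_right hT2.le))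
        (integrableOn_const (by simp [Real.volume_Ioc]))
        measurableSet_Ioc
      intro l hl
      rw [hwh_eq l, abs_mul]
      have hw : |1 - l/T| ≤ 1 := by
        rw [abs_le]
        constructor
        · have : l/T ≤ 1 := (div_le_one hT0).2 (le_trans hl.2 hT2.le)
          linarith
        · have : 0 ≤ l/T := div_nonneg (by linarith [hl.1]) hT0.le
          linarith
      calc |1 - l/T| * |∫ x in Ω, Real.cos (l * f x)| ≤ 1 * V :=
            mul_le_mul hw (hhV l) (abs_nonneg _) zero_le_one
        _ = V := one_mul V
    calc _ ≤ ∫ _l in Set.Ioc (0:ℝ) 2, V := hmono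
      _ = 2 * V := by
          rw [setIntegral_const]
          simp [Real.volume_Ioc]
  have piece2 : (∫ l in Set.Ioc (2:ℝ) T, |∫ x in Ω, (1 - l/T) * Real.cos (l * f x)|)
      ≤ C * (Real.log T)^(m+1) := by
    have hbound : ∀ l ∈ Set.Ioc (2:ℝ) T,
        |∫ x in Ω, (1 - l/T) * Real.cos (l * f x)| ≤ C * ((Real.log l)^m / l) := by
      intro l hl
      have hl2 : 2 ≤ l := hl.1.le
      have hl0 : 0 < l := by linarith
      -- relate to oscillatory integral
      have hexp_eq : ∀ x : ℝ × ℝ, Complex.I * (l:ℂ) * (f x : ℂ)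
          = ((l * f x : ℝ) : ℂ) * Complex.I := by
        intro x; push_cast; ring
      have hexp_meas : Measurable (fun x : ℝ × ℝ => Complex.exp (Complex.I * l * f x)) := by
        apply Complex.continuous_exp.measurable.comp
        exact measurable_const.mul (Complex.measurable_ofReal.comp hf)
      have hexp_int : Integrable (fun x : ℝ × ℝ => Complex.exp (Complex.I * l * f x))
          (volume.restrict Ω) := by
        apply Integrable.mono' (integrable_const 1) hexp_meas.aestronglyMeasurable
        apply Filter.Eventually.of_forall
        intro x
        rw [hexp_eq x, Complex.norm_exp_ofReal_mul_I]
      have hre : (∫ x in Ω, Real.cos (l * f x))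
          = (∫ x in Ω, Complex.exp (Complex.I * l * f x)).re := by
        have hpt : ∀ x : ℝ × ℝ, Real.cos (l * f x)
            = (Complex.exp (Complex.I * (l:ℂ) * (f x:ℂ))).re := by
          intro x
          rw [hexp_eq x, Complex.exp_ofReal_mul_I_re]
        rw [integral_congr_ae (Filter.Eventually.of_forall hpt)]
        have := integral_re hexp_int
        simpa using this
      have hnorm : |∫ x in Ω, Real.cos (l * f x)|
          ≤ ‖∫ x in Ω, Complex.exp (Complex.I * l * f x)‖ := by
        rw [hre]
        exact Complex.abs_re_le_norm _
      have hosc' := hosc l hl2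
      have hw : |1 - l/T| ≤ 1 := by
        rw [abs_le]
        constructor
        · have : l/T ≤ 1 := (div_le_one hT0).2 hl.2
          linarith
        · have : 0 ≤ l/T := div_nonneg (by linarith [hl.1]) hT0.le
          linarith
      rw [hwh_eq l, abs_mul]
      calc |1 - l/T| * |∫ x in Ω, Real.cos (l * f x)|
          ≤ 1 * (C * l⁻¹ * (Real.log l)^m) := by
            apply mul_le_mul hw (le_trans hnorm hosc') (abs_nonneg _) zero_le_one
        _ = C * ((Real.log l)^m / l) := by rw [div_eq_mul_inv]; ring
    have hbint : IntegrableOn (fun l => C * ((Real.log l)^m / l)) (Set.Ioc (2:ℝ) T) volume := by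
      apply IntegrableOn.mono_set _ Set.Ioc_subset_Icc_self
      apply ContinuousOn.integrableOn_Icc
      apply ContinuousOn.mul continuousOn_const
      apply ContinuousOn.div
      · exact (Real.continuousOn_log.mono (by intro x hx; simp; nlinarith [hx.1])).pow m
      · exact continuousOn_id
      · intro x hx; nlinarith [hx.1]
    calc (∫ l in Set.Ioc (2:ℝ) T, |∫ x in Ω, (1 - l/T) * Real.cos (l * f x)|)
        ≤ ∫ l in Set.Ioc (2:ℝ) T, C * ((Real.log l)^m / l) :=
          setIntegral_mono_on
            (hl_abs.mono_set (Set.Ioc_subset_Ioc_left (by norm_num))) hbint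
            measurableSet_Ioc hbound
      _ = C * (((Real.log T)^(m+1) - (Real.log 2)^(m+1))/((m:ℝ)+1)) := by
          rw [← intervalIntegral.integral_of_le hT2.le, intervalIntegral.integral_const_mul,
            kerL3 T m hT2.le]
      _ ≤ C * (Real.log T)^(m+1) := by
          have hlogT : 0 < Real.log T := Real.log_pos (by linarith)
          have hTlog2 : Real.log 2 ≤ Real.log T := (Real.log_lt_log (by norm_num) hT2).le
          have hnum : 0 ≤ (Real.log T)^(m+1) - (Real.log 2)^(m+1) := by
            have := pow_le_pow_left₀ hlog2.le hTlog2 (m+1)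
            linarith
          have hdiv : ((Real.log T)^(m+1) - (Real.log 2)^(m+1))/((m:ℝ)+1)
              ≤ (Real.log T)^(m+1) := by
            have h1 : ((Real.log T)^(m+1) - (Real.log 2)^(m+1))/((m:ℝ)+1)
                ≤ (Real.log T)^(m+1) - (Real.log 2)^(m+1) :=
              div_le_self hnum (by push_cast; linarith [Nat.cast_nonneg (α := ℝ) m])
            have h2 : (0:ℝ) ≤ (Real.log 2)^(m+1) := by positivity
            linarith
          exact mul_le_mul_of_nonneg_left hdiv hC.le
  -- assemble
  have stepAll : Real.cos 1 * (T/2) * (volume E).toReal ≤ 2*V + C*(Real.log T)^(m+1) := by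
    calc Real.cos 1 * (T/2) * (volume E).toReal
        ≤ ∫ x in E, ∫ l in Set.Ioc (0:ℝ) T, (1 - l/T) * Real.cos (l * f x) := stepA
      _ ≤ ∫ x in Ω, ∫ l in Set.Ioc (0:ℝ) T, (1 - l/T) * Real.cos (l * f x) := stepB
      _ = ∫ l in Set.Ioc (0:ℝ) T, ∫ x in Ω, (1 - l/T) * Real.cos (l * f x) := hswap.symm
      _ ≤ ∫ l in Set.Ioc (0:ℝ) T, |∫ x in Ω, (1 - l/T) * Real.cos (l * f x)| := habs_le
      _ = _ := hsplit
      _ ≤ 2*V + C*(Real.log T)^(m+1) := add_le_add piece1 piece2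
  have hlogε : Real.log ε < 0 := Real.log_neg hε0 (by linarith)
  have hL : Real.log T = |Real.log ε| := by
    rw [hTdef, Real.log_inv, abs_of_neg hlogε]
  have hLlog2 : Real.log 2 ≤ |Real.log ε| := by
    rw [abs_of_neg hlogε]
    have h1 : Real.log ε < Real.log (1/2) := Real.log_lt_log hε0 hε2
    rw [show (1:ℝ)/2 = 2⁻¹ by norm_num, Real.log_inv] at h1
    linarith
  rw [hL] at stepAll
  set L := |Real.log ε| with hLdef
  have hLpos : 0 < L := lt_of_lt_of_le hlog2 hLlog2
  have hEle : (volume E).toReal ≤ 2*ε/Real.cos 1 * (2*V + C*L^(m+1)) := by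
    have h1 : (0:ℝ) < 2*ε/Real.cos 1 := by positivity
    have h2 := mul_le_mul_of_nonneg_right stepAll h1.le
    calc (volume E).toReal
        = Real.cos 1 * (T/2) * (volume E).toReal * (2*ε/Real.cos 1) := by
          rw [hTdef]; field_simp
      _ ≤ (2*V + C*L^(m+1)) * (2*ε/Real.cos 1) := h2
      _ = 2*ε/Real.cos 1 * (2*V + C*L^(m+1)) := by ring
  have hpow : (Real.log 2)^(m+1) ≤ L^(m+1) := pow_le_pow_left₀ hlog2.le hLlog2 _
  have h2V : 2*V + C*L^(m+1) ≤ (2*V/(Real.log 2)^(m+1) + C) * L^(m+1) := by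
    have h : 2*V ≤ 2*V/(Real.log 2)^(m+1) * L^(m+1) := by
      rw [div_mul_eq_mul_div, le_div_iff₀ (by positivity)]
      exact mul_le_mul_of_nonneg_left hpow (by positivity)
    rw [add_mul]
    linarith
  calc (volume E).toReal ≤ 2*ε/Real.cos 1 * (2*V + C*L^(m+1)) := hEle
    _ ≤ 2*ε/Real.cos 1 * ((2*V/(Real.log 2)^(m+1) + C) * L^(m+1)) :=
        mul_le_mul_of_nonneg_left h2V (by positivity)
    _ = 2/Real.cos 1 * (2*V/(Real.log 2)^(m+1) + C) * ε * L^(m+1) := by ring
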